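/- Let K be an algebraically closed field of characteristic 2 and X ⊂ ℙ³(K) a quartic surface whose dual variety (the closure of the image of the Gauss map x ↦ ∇F(x)) is a line. Then X is not normal, i.e., Sing(X) is infinite. -/

import Mathlib

open MvPolynomial

set_option maxRecDepth 8000

private lemma sq14_line_poly {K : Type*} [CommRing K] (F : MvPolynomial (Fin 4) K)
    (v w : Fin 4 → K) :
    ∃ h : Polynomial K, ∀ s : K, h.eval s = eval (v + s • w) F := by
  refine ⟨eval₂ Polynomial.C (fun i => Polynomial.C (v i) + Polynomial.X * Polynomial.C (w i)) F,
    fun s => ?_⟩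
  rw [MvPolynomial.polynomial_eval_eval₂]
  rw [show ((Polynomial.evalRingHom s).comp Polynomial.C) = RingHom.id K from by ext x; simp]
  rw [show (fun i => Polynomial.eval s (Polynomial.C (v i) + Polynomial.X * Polynomial.C (w i)))
      = v + s • w from by
    funext i
    simp only [Polynomial.eval_add, Polynomial.eval_mul, Polynomial.eval_C, Polynomial.eval_X,
      Pi.add_apply, Pi.smul_apply, smul_eq_mul]]
  rfl

private lemma sq14_exists_root_line {K : Type*} [Field K] [IsAlgClosed K]
    (F : MvPolynomial (Fin 4) K)
    (hhom : ∀ (c : K) (v : Fin 4 → K), eval (c • v) F = c ^ 4 * eval v F)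
    (w : Fin 4 → K) (hw : eval w F ≠ 0) (v : Fin 4 → K) :
    ∃ s : K, eval (v + s • w) F = 0 := by
  by_contra hcon
  push_neg at hcon
  obtain ⟨h, hh⟩ := sq14_line_poly F v w
  have hdeg : h.degree = 0 := by
    by_contra hd
    obtain ⟨s, hs⟩ := IsAlgClosed.exists_root h hd
    exact hcon s (by rw [← hh s]; exact hs)
  set k := h.coeff 0 with hk
  have hC : h = Polynomial.C k := Polynomial.eq_C_of_degree_le_zero (le_of_eq hdeg)
  have hval : ∀ s : K, eval (v + s • w) F = k := by
    intro s
    rw [← hh s, hC, Polynomial.eval_C]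
  have hr : ∀ r : K, r ≠ 0 → eval (w + r • v) F = r ^ 4 * k := by
    intro r hr0
    have : w + r • v = r • (v + r⁻¹ • w) := by
      rw [smul_add, smul_smul, mul_inv_cancel₀ hr0, one_smul]
      abel
    rw [this, hhom, hval]
  obtain ⟨h₂, hh₂⟩ := sq14_line_poly F w v
  have h₃ : h₂ - Polynomial.C k * Polynomial.X ^ 4 = 0 := by
    apply Polynomial.eq_zero_of_infinite_isRoot
    apply Set.Infinite.mono (s := {r : K | r ≠ 0})
    · intro r hr0
      simp only [Set.mem_setOf_eq, Polynomial.IsRoot, Polynomial.eval_sub, Polynomial.eval_mul,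
        Polynomial.eval_pow, Polynomial.eval_C, Polynomial.eval_X]
      rw [hh₂ r, hr r hr0]
      ring
    · have : ({0}ᶜ : Set K).Infinite := Set.Finite.infinite_compl (Set.finite_singleton 0)
      convert this using 1
      ext r; simp
  apply hw
  have h20 : h₂.eval 0 = 0 := by
    have := sub_eq_zero.mp h₃
    rw [this]; simp
  rw [← h20, hh₂]
  simp

set_option maxHeartbeats 2000000 in
theorem stmt_14 (K : Type*) [Field K] [IsAlgClosed K] [CharP K 2]
    (a b c d₁ d₂ d e₁ e₂ e f₁ f₂ q₁ q₂ q₃ : K)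
    (F : MvPolynomial (Fin 4) K)
    (hF : F = C a * X 2 ^ 4 + C b * X 3 ^ 4 + C c * X 2 ^ 2 * X 3 ^ 2
        + X 2 ^ 2 * (C d₁ * X 0 ^ 2 + C d₂ * X 1 ^ 2 + C d * X 0 * X 1)
        + X 3 ^ 2 * (C e₁ * X 0 ^ 2 + C e₂ * X 1 ^ 2 + C e * X 0 * X 1)
        + (C q₁ * X 0 ^ 2 + C q₂ * X 1 ^ 2 + C q₃ * X 0 * X 1) ^ 2
        + C f₁ * X 0 ^ 3 * X 1 + C f₂ * X 0 * X 1 ^ 3)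
    (hirr : Irreducible F) :
    {p : Projectivization K (Fin 4 → K) |
        eval p.rep F = 0 ∧ ∀ i, eval p.rep (pderiv i F) = 0}.Infinite := by
  classical
  obtain ⟨γ, hγ⟩ := IsAlgClosed.exists_pow_nat_eq (k := K) d (n := 2) two_pos
  obtain ⟨δ, hδ⟩ := IsAlgClosed.exists_pow_nat_eq (k := K) e (n := 2) two_pos
  obtain ⟨α, hα⟩ := IsAlgClosed.exists_pow_nat_eq (k := K) f₁ (n := 2) two_pos
  obtain ⟨β, hβ⟩ := IsAlgClosed.exists_pow_nat_eq (k := K) f₂ (n := 2) two_pos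
  have h2K : (2 : K) = 0 := by
    have := CharP.cast_eq_zero K 2; simpa using this
  have h2 : (2 : MvPolynomial (Fin 4) K) = 0 := by
    have := CharP.cast_eq_zero (MvPolynomial (Fin 4) K) 2; simpa using this
  set M : MvPolynomial (Fin 4) K :=
    C d * X 2 ^ 2 + C e * X 3 ^ 2 + C f₁ * X 0 ^ 2 + C f₂ * X 1 ^ 2 with hM
  -- the derivatives
  have hp0 : pderiv 0 F = X 1 * M := by
    rw [hF, hM]
    simp only [map_add, pderiv_mul, pderiv_pow, pderiv_C, pderiv_X_self,
      pderiv_X_of_ne (by decide : (1:Fin 4) ≠ 0), pderiv_X_of_ne (by decide : (2:Fin 4) ≠ 0),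
      pderiv_X_of_ne (by decide : (3:Fin 4) ≠ 0)]
    push_cast
    linear_combination (X 2 ^ 2 * C d₁ * X 0 + X 3 ^ 2 * X 0 * C e₁
      + X 0 * X 1 ^ 2 * C q₁ * C q₂ * 2 + X 0 * X 1 ^ 2 * C q₃ ^ 2
      + X 0 ^ 2 * X 1 * C q₁ * C q₃ * 3 + X 0 ^ 2 * X 1 * C f₁ + X 0 ^ 3 * C q₁ ^ 2 * 2
      + X 1 ^ 3 * C q₂ * C q₃) * h2
  have hp1 : pderiv 1 F = X 0 * M := by
    rw [hF, hM]
    simp only [map_add, pderiv_mul, pderiv_pow, pderiv_C, pderiv_X_self,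
      pderiv_X_of_ne (by decide : (0:Fin 4) ≠ 1), pderiv_X_of_ne (by decide : (2:Fin 4) ≠ 1),
      pderiv_X_of_ne (by decide : (3:Fin 4) ≠ 1)]
    push_cast
    linear_combination (X 2 ^ 2 * C d₂ * X 1 + X 3 ^ 2 * X 1 * C e₂
      + X 0 * X 1 ^ 2 * C q₂ * C q₃ * 3 + X 0 * X 1 ^ 2 * C f₂
      + X 0 ^ 2 * X 1 * C q₁ * C q₂ * 2 + X 0 ^ 2 * X 1 * C q₃ ^ 2 + X 0 ^ 3 * C q₁ * C q₃
      + X 1 ^ 3 * C q₂ ^ 2 * 2) * h2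
  have hp2 : pderiv 2 F = 0 := by
    rw [hF]
    simp only [map_add, pderiv_mul, pderiv_pow, pderiv_C, pderiv_X_self,
      pderiv_X_of_ne (by decide : (0:Fin 4) ≠ 2), pderiv_X_of_ne (by decide : (1:Fin 4) ≠ 2),
      pderiv_X_of_ne (by decide : (3:Fin 4) ≠ 2)]
    push_cast
    linear_combination (X 2 * X 3 ^ 2 * C c + X 2 * C d₁ * X 0 ^ 2 + X 2 * X 0 * X 1 * C d
      + X 2 * C d₂ * X 1 ^ 2 + X 2 ^ 3 * C a * 2) * h2
  have hp3 : pderiv 3 F = 0 := by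
    rw [hF]
    simp only [map_add, pderiv_mul, pderiv_pow, pderiv_C, pderiv_X_self,
      pderiv_X_of_ne (by decide : (0:Fin 4) ≠ 3), pderiv_X_of_ne (by decide : (1:Fin 4) ≠ 3),
      pderiv_X_of_ne (by decide : (2:Fin 4) ≠ 3)]
    push_cast
    linear_combination (X 2 ^ 2 * X 3 * C c + X 3 * X 0 * X 1 * C e + X 3 * X 0 ^ 2 * C e₁
      + X 3 * X 1 ^ 2 * C e₂ + X 3 ^ 3 * C b * 2) * h2
  -- homogeneity of F
  have hhom : ∀ (t : K) (v : Fin 4 → K), eval (t • v) F = t ^ 4 * eval v F := by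
    intro t v
    rw [hF]
    simp only [eval_add, eval_mul, eval_pow, eval_C, eval_X, Pi.smul_apply, smul_eq_mul]
    ring
  -- the linear form
  set Lm : (Fin 4 → K) →ₗ[K] K :=
    { toFun := fun v => α * v 0 + β * v 1 + γ * v 2 + δ * v 3
      map_add' := fun x y => by simp only [Pi.add_apply]; ring
      map_smul' := fun t x => by simp only [Pi.smul_apply, smul_eq_mul, RingHom.id_apply]; ring }
    with hLm
  have hLm_apply : ∀ v : Fin 4 → K, Lm v = α * v 0 + β * v 1 + γ * v 2 + δ * v 3 :=
    fun _ => rfl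
  have hMev : ∀ v : Fin 4 → K, eval v M = (Lm v) ^ 2 := by
    intro v
    rw [hM, hLm_apply]
    simp only [eval_add, eval_mul, eval_pow, eval_C, eval_X]
    linear_combination (-(v 2 ^ 2)) * hγ + (-(v 3 ^ 2)) * hδ + (-(v 0 ^ 2)) * hα
      + (-(v 1 ^ 2)) * hβ -
      (α * v 0 * (β * v 1 + γ * v 2 + δ * v 3) + β * v 1 * (γ * v 2 + δ * v 3)
        + γ * v 2 * (δ * v 3)) * h2K
  -- membership in the singular locus
  have hmem : ∀ (v : Fin 4 → K) (hv : v ≠ 0), eval v F = 0 → Lm v = 0 →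
      Projectivization.mk K v hv ∈ {p : Projectivization K (Fin 4 → K) |
        eval p.rep F = 0 ∧ ∀ i, eval p.rep (pderiv i F) = 0} := by
    intro v hv hFv hLv
    obtain ⟨u, hu⟩ := Projectivization.exists_smul_eq_mk_rep K v hv
    have hrep : (Projectivization.mk K v hv).rep = (u : K) • v := by
      rw [← hu]; rfl
    have hMv : eval ((u : K) • v) M = 0 := by
      rw [hMev, map_smul, smul_eq_mul, hLv, mul_zero]
      norm_num
    simp only [Set.mem_setOf_eq]
    constructor
    · rw [hrep, hhom, hFv, mul_zero]
    · intro i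
      fin_cases i
      · show eval ((Projectivization.mk K v hv).rep) (pderiv (0 : Fin 4) F) = 0
        rw [hp0, hrep, eval_mul, hMv, mul_zero]
      · show eval ((Projectivization.mk K v hv).rep) (pderiv (1 : Fin 4) F) = 0
        rw [hp1, hrep, eval_mul, hMv, mul_zero]
      · show eval ((Projectivization.mk K v hv).rep) (pderiv (2 : Fin 4) F) = 0
        rw [hp2]; simp
      · show eval ((Projectivization.mk K v hv).rep) (pderiv (3 : Fin 4) F) = 0
        rw [hp3]; simp
  -- three independent vectors in the kernel of Lm
  have hrank : 3 ≤ Module.finrank K (LinearMap.ker Lm) := by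
    have h1 := LinearMap.finrank_range_add_finrank_ker Lm
    have h2' : Module.finrank K (LinearMap.range Lm) ≤ 1 := by
      have := Submodule.finrank_le (LinearMap.range Lm)
      simpa [Module.finrank_self] using this
    have h3 : Module.finrank K (Fin 4 → K) = 4 := Module.finrank_fin_fun K
    omega
  obtain ⟨u, hu⟩ := exists_linearIndependent_of_le_finrank hrank
  set U : Fin 3 → (Fin 4 → K) := fun i => (u i : Fin 4 → K) with hU
  have hUker : ∀ i, Lm (U i) = 0 := fun i => LinearMap.mem_ker.mp (u i).2
  have hUli : LinearIndependent K U :=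
    hu.map' (LinearMap.ker Lm).subtype (Submodule.ker_subtype _)
  have hcoord : ∀ a₀ a₁ a₂ b₀ b₁ b₂ : K,
      a₀ • U 0 + a₁ • U 1 + a₂ • U 2 = b₀ • U 0 + b₁ • U 1 + b₂ • U 2 →
      a₀ = b₀ ∧ a₁ = b₁ ∧ a₂ = b₂ := by
    intro a₀ a₁ a₂ b₀ b₁ b₂ hcombo
    have hz : (a₀ - b₀) • U 0 + (a₁ - b₁) • U 1 + (a₂ - b₂) • U 2 = 0 := by
      have : (a₀ - b₀) • U 0 + (a₁ - b₁) • U 1 + (a₂ - b₂) • U 2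
          = (a₀ • U 0 + a₁ • U 1 + a₂ • U 2) - (b₀ • U 0 + b₁ • U 1 + b₂ • U 2) := by
        module
      rw [this, hcombo, sub_self]
    have := Fintype.linearIndependent_iff.mp hUli ![a₀ - b₀, a₁ - b₁, a₂ - b₂] (by
      rw [Fin.sum_univ_three]
      simpa using hz)
    refine ⟨sub_eq_zero.mp (this 0), sub_eq_zero.mp (this 1), sub_eq_zero.mp (this 2)⟩
  have hzcoord : ∀ a₀ a₁ a₂ : K, a₀ • U 0 + a₁ • U 1 + a₂ • U 2 = 0 →
      a₀ = 0 ∧ a₁ = 0 ∧ a₂ = 0 := by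
    intro a₀ a₁ a₂ h
    exact hcoord a₀ a₁ a₂ 0 0 0 (by rw [h]; module)
  have hLker : ∀ a₀ a₁ a₂ : K, Lm (a₀ • U 0 + a₁ • U 1 + a₂ • U 2) = 0 := by
    intro a₀ a₁ a₂
    rw [map_add, map_add, map_smul, map_smul, map_smul, hUker 0, hUker 1, hUker 2,
      smul_zero, smul_zero, smul_zero, add_zero, add_zero]
  -- generic infinitude from a family
  have hfam : ∀ (f : K → (Fin 4 → K)) (h0 : ∀ t, f t ≠ 0),
      (∀ t, eval (f t) F = 0) → (∀ t, Lm (f t) = 0) →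
      (∀ (t t' : K) (c : K), c • f t' = f t → t = t') →
      {p : Projectivization K (Fin 4 → K) |
        eval p.rep F = 0 ∧ ∀ i, eval p.rep (pderiv i F) = 0}.Infinite := by
    intro f h0 hf hLf hinj
    refine Set.infinite_of_injective_forall_mem
      (f := fun t : K => Projectivization.mk K (f t) (h0 t)) ?_ ?_
    · intro t t' htt'
      obtain ⟨cu, hc⟩ := (Projectivization.mk_eq_mk_iff K _ _ (h0 t) (h0 t')).mp htt'
      rw [Units.smul_def] at hc
      exact hinj t t' (cu : K) hc
    · intro t
      exact hmem (f t) (h0 t) (hf t) (hLf t)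
  -- case split on whether F vanishes on the whole plane
  by_cases hall : ∀ x : Fin 3 → K, eval (x 0 • U 0 + x 1 • U 1 + x 2 • U 2) F = 0
  · -- F vanishes on the plane: the pencil t ↦ U 1 + t • U 2 works
    apply hfam (fun t => U 1 + t • U 2)
    · intro t h
      have hz : (0:K) • U 0 + (1:K) • U 1 + t • U 2 = 0 := by rw [← h]; module
      exact one_ne_zero (hzcoord 0 1 t hz).2.1
    · intro t
      have h := hall ![0, 1, t]
      simp only [Matrix.cons_val_zero, Matrix.cons_val_one, Matrix.head_cons,
        Matrix.cons_val_two, Matrix.tail_cons, zero_smul, one_smul, zero_add] at h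
      exact h
    · intro t
      rw [show U 1 + t • U 2 = (0:K) • U 0 + (1:K) • U 1 + t • U 2 by module]
      exact hLker 0 1 t
    · intro t t' cc hc
      have hc' : (cc * 0) • U 0 + (cc * 1) • U 1 + (cc * t') • U 2
          = (0:K) • U 0 + (1:K) • U 1 + t • U 2 := by
        calc (cc * 0) • U 0 + (cc * 1) • U 1 + (cc * t') • U 2
            = cc • (U 1 + t' • U 2) := by module
          _ = U 1 + t • U 2 := hc
          _ = (0:K) • U 0 + (1:K) • U 1 + t • U 2 := by module
      obtain ⟨-, h1, h2'⟩ := hcoord (cc*0) (cc*1) (cc*t') 0 1 t hc'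
      rw [mul_one] at h1
      rw [h1, one_mul] at h2'
      exact h2'.symm
  · push_neg at hall
    obtain ⟨x, hx⟩ := hall
    set w : Fin 4 → K := x 0 • U 0 + x 1 • U 1 + x 2 • U 2 with hw
    have hwK : Lm w = 0 := by
      rw [hw]; exact hLker _ _ _
    have hroot : ∀ v : Fin 4 → K, ∃ s : K, eval (v + s • w) F = 0 :=
      sq14_exists_root_line F hhom w hx
    -- x ≠ 0
    have hx0 : x 0 ≠ 0 ∨ (x 0 = 0 ∧ x 1 ≠ 0) ∨ (x 0 = 0 ∧ x 1 = 0 ∧ x 2 ≠ 0) := by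
      rcases eq_or_ne (x 0) 0 with e0 | e0
      · rcases eq_or_ne (x 1) 0 with e1 | e1
        · rcases eq_or_ne (x 2) 0 with e2 | e2
          · exfalso
            apply hx
            have hw0 : w = (0 : K) • (0 : Fin 4 → K) := by
              rw [hw, e0, e1, e2]; module
            rw [hw0, hhom]
            simp
          · exact Or.inr (Or.inr ⟨e0, e1, e2⟩)
        · exact Or.inr (Or.inl ⟨e0, e1⟩)
      · exact Or.inl e0
    rcases hx0 with h0' | ⟨h00, h1'⟩ | ⟨h00, h10, h2''⟩
    · -- x 0 ≠ 0 : family U 1 + t • U 2 + s • w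
      have hch : ∀ t : K, ∃ s : K, eval (U 1 + t • U 2 + s • w) F = 0 := by
        intro t; exact hroot (U 1 + t • U 2)
      choose s hs using hch
      have hcombo : ∀ t : K, U 1 + t • U 2 + s t • w
          = (s t * x 0) • U 0 + (1 + s t * x 1) • U 1 + (t + s t * x 2) • U 2 := by
        intro t; rw [hw]; module
      apply hfam (fun t => U 1 + t • U 2 + s t • w)
      · intro t h
        have hx3 : (s t * x 0) • U 0 + (1 + s t * x 1) • U 1 + (t + s t * x 2) • U 2
            = 0 := by rw [← hcombo t]; exact h
        obtain ⟨e0, e1, -⟩ := hzcoord _ _ _ hx3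
        have hst : s t = 0 := by
          rcases mul_eq_zero.mp e0 with h' | h'
          · exact h'
          · exact absurd h' h0'
        rw [hst, zero_mul, add_zero] at e1
        exact one_ne_zero e1
      · exact hs
      · intro t
        rw [hcombo t]
        exact hLker _ _ _
      · intro t t' cc hc
        rw [hcombo t, hcombo t'] at hc
        have hc' : (cc * (s t' * x 0)) • U 0 + (cc * (1 + s t' * x 1)) • U 1
            + (cc * (t' + s t' * x 2)) • U 2
            = (s t * x 0) • U 0 + (1 + s t * x 1) • U 1 + (t + s t * x 2) • U 2 := by
          rw [← hc]; module
        obtain ⟨e0, e1, e2'⟩ := hcoord _ _ _ _ _ _ hc'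
        have hcs : cc * s t' = s t := by
          have e0' : (cc * s t') * x 0 = s t * x 0 := by linear_combination e0
          exact mul_right_cancel₀ h0' e0'
        have hc1 : cc = 1 := by
          have h := e1
          rw [mul_add, mul_one, ← mul_assoc, hcs] at h
          exact add_right_cancel h
        rw [hc1, one_mul] at hcs
        rw [hc1, one_mul, hcs] at e2'
        exact (add_right_cancel e2').symm
    · -- x 0 = 0, x 1 ≠ 0 : family U 0 + t • U 2 + s • w
      have hch : ∀ t : K, ∃ s : K, eval (U 0 + t • U 2 + s • w) F = 0 := by
        intro t; exact hroot (U 0 + t • U 2)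
      choose s hs using hch
      have hcombo : ∀ t : K, U 0 + t • U 2 + s t • w
          = (1:K) • U 0 + (s t * x 1) • U 1 + (t + s t * x 2) • U 2 := by
        intro t; rw [hw, h00]; module
      apply hfam (fun t => U 0 + t • U 2 + s t • w)
      · intro t h
        have hx3 : (1:K) • U 0 + (s t * x 1) • U 1 + (t + s t * x 2) • U 2
            = 0 := by rw [← hcombo t]; exact h
        obtain ⟨e0, -, -⟩ := hzcoord _ _ _ hx3
        exact one_ne_zero e0
      · exact hs
      · intro t
        rw [hcombo t]
        exact hLker _ _ _
      · intro t t' cc hc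
        rw [hcombo t, hcombo t'] at hc
        have hc' : (cc * 1) • U 0 + (cc * (s t' * x 1)) • U 1
            + (cc * (t' + s t' * x 2)) • U 2
            = (1:K) • U 0 + (s t * x 1) • U 1 + (t + s t * x 2) • U 2 := by
          rw [← hc]; module
        obtain ⟨e0, e1, e2'⟩ := hcoord _ _ _ _ _ _ hc'
        have hc1 : cc = 1 := by rwa [mul_one] at e0
        rw [hc1, one_mul] at e1 e2'
        have hcs : s t' = s t := by
          have e1' : s t' * x 1 = s t * x 1 := e1
          exact mul_right_cancel₀ h1' e1'
        rw [hcs] at e2'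
        exact (add_right_cancel e2').symm
    · -- x 0 = 0, x 1 = 0, x 2 ≠ 0 : family U 0 + t • U 1 + s • w
      have hch : ∀ t : K, ∃ s : K, eval (U 0 + t • U 1 + s • w) F = 0 := by
        intro t; exact hroot (U 0 + t • U 1)
      choose s hs using hch
      have hcombo : ∀ t : K, U 0 + t • U 1 + s t • w
          = (1:K) • U 0 + t • U 1 + (s t * x 2) • U 2 := by
        intro t; rw [hw, h00, h10]; module
      apply hfam (fun t => U 0 + t • U 1 + s t • w)
      · intro t h
        have hx3 : (1:K) • U 0 + t • U 1 + (s t * x 2) • U 2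
            = 0 := by rw [← hcombo t]; exact h
        obtain ⟨e0, -, -⟩ := hzcoord _ _ _ hx3
        exact one_ne_zero e0
      · exact hs
      · intro t
        rw [hcombo t]
        exact hLker _ _ _
      · intro t t' cc hc
        rw [hcombo t, hcombo t'] at hc
        have hc' : (cc * 1) • U 0 + (cc * t') • U 1 + (cc * (s t' * x 2)) • U 2
            = (1:K) • U 0 + t • U 1 + (s t * x 2) • U 2 := by
          rw [← hc]; module
        obtain ⟨e0, e1, -⟩ := hcoord _ _ _ _ _ _ hc'
        have hc1 : cc = 1 := by rwa [mul_one] at e0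
        rw [hc1, one_mul] at e1
        exact e1.symm
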